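/- Let J(r) = r^{-α} and for n ≥ 1 define the single-bubble energy H̲_J(n) = 2·∑_{x=1}^{n} ∑_{y∈ℤ∖{1,…,n}} |x−y|^{−α}. If 1 < α < 2 then H̲_J(n) ≥ 4 + (4/((α−1)(2−α)))·((n+1)^{2−α} − 2^{2−α}); if α = 2 then H̲_J(n) ≥ 4 + 4·log(1+n) − 4·log 2. -/

import Mathlib

noncomputable section

open Finset Filter

/-- The single-bubble energy `H̲_J(n)`: the energy of the configuration equal to `−1`
exactly on `{1,…,n}`, for the coupling `J(r) = r^{-α}`. -/
def Hbar (α : ℝ) (n : ℕ) : ℝ :=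
  2 * ∑ x ∈ Finset.Icc (1 : ℤ) (n : ℤ), ∑' y : ℤ,
      if y ∈ Finset.Icc (1 : ℤ) (n : ℤ) then 0 else |(x : ℝ) - (y : ℝ)| ^ (-α)

private def rowF (α : ℝ) (n : ℕ) (x : ℤ) : ℤ → ℝ :=
  fun y => if y ∈ Finset.Icc (1 : ℤ) (n : ℤ) then 0 else |(x : ℝ) - (y : ℝ)| ^ (-α)

private def Aα (α r : ℝ) : ℝ := ∑' k : ℕ, (r + (k : ℝ)) ^ (-α)

private lemma mvt_rpow (s p : ℝ) (hs : 0 < s) :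
    ∃ c ∈ Set.Ioo s (s + 1), (s + 1) ^ p - s ^ p = p * c ^ (p - 1) := by
  obtain ⟨c, hc, hc'⟩ := exists_hasDerivAt_eq_slope (fun t : ℝ => t ^ p)
    (fun t : ℝ => p * t ^ (p - 1)) (by linarith : s < s + 1)
    (ContinuousOn.rpow_const continuousOn_id fun t ht => Or.inl (hs.trans_le ht.1).ne')
    (fun t ht => Real.hasDerivAt_rpow_const (Or.inl (hs.trans ht.1).ne'))
  refine ⟨c, hc, ?_⟩
  rw [hc']
  norm_num

private lemma ineq1 {α s : ℝ} (hα : 1 < α) (hs : 1 ≤ s) :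
    s ^ (1 - α) - (s + 1) ^ (1 - α) ≤ (α - 1) * s ^ (-α) := by
  obtain ⟨c, hc, hc'⟩ := mvt_rpow s (1 - α) (by linarith)
  rw [show (1 - α) - 1 = -α by ring] at hc'
  have h2 : s ^ (1 - α) - (s + 1) ^ (1 - α) = (α - 1) * c ^ (-α) := by
    rw [show (α - 1) * c ^ (-α) = -((1 - α) * c ^ (-α)) by ring, ← hc']; ring
  rw [h2]
  have hcs : c ^ (-α) ≤ s ^ (-α) :=
    Real.rpow_le_rpow_of_nonpos (by linarith) hc.1.le (by linarith)
  exact mul_le_mul_of_nonneg_left hcs (by linarith)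

private lemma ineq2 {α s : ℝ} (hα : 1 < α) (hα2 : α ≤ 2) (hs : 1 ≤ s) :
    (s + 1) ^ (2 - α) - s ^ (2 - α) ≤ (2 - α) * s ^ (1 - α) := by
  obtain ⟨c, hc, hc'⟩ := mvt_rpow s (2 - α) (by linarith)
  rw [show (2 - α) - 1 = 1 - α by ring] at hc'
  rw [hc']
  have hcs : c ^ (1 - α) ≤ s ^ (1 - α) :=
    Real.rpow_le_rpow_of_nonpos (by linarith) hc.1.le (by linarith)
  exact mul_le_mul_of_nonneg_left hcs (by linarith)

private lemma ineq3 {s : ℝ} (hs : 1 ≤ s) : Real.log (s + 1) - Real.log s ≤ s⁻¹ := by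
  have hs0 : (0 : ℝ) < s := by linarith
  have h := Real.log_le_sub_one_of_pos (show (0 : ℝ) < (s + 1) / s by positivity)
  rw [Real.log_div (by linarith) hs0.ne'] at h
  have he : (s + 1) / s - 1 = s⁻¹ := by field_simp; ring
  linarith

private lemma summable_shift {α : ℝ} (hα : 1 < α) {r : ℝ} (hr : 1 ≤ r) :
    Summable (fun k : ℕ => (r + (k : ℝ)) ^ (-α)) := by
  have h1 : Summable ((fun n : ℕ => (n : ℝ) ^ (-α)) ∘ (fun k : ℕ => 1 + k)) :=
    (Real.summable_nat_rpow.mpr (by linarith)).comp_injective (fun a b h => by omega)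
  have h2 : Summable (fun k : ℕ => ((1 : ℝ) + (k : ℝ)) ^ (-α)) := by
    refine h1.congr fun k => ?_
    simp only [Function.comp_apply]
    push_cast
    ring_nf
  refine Summable.of_nonneg_of_le (fun k => Real.rpow_nonneg ?_ _) (fun k => ?_) h2
  · have : (0 : ℝ) ≤ (k : ℝ) := Nat.cast_nonneg k
    linarith
  · exact Real.rpow_le_rpow_of_nonpos
      (by have : (0 : ℝ) ≤ (k : ℝ) := Nat.cast_nonneg k; linarith)
      (by linarith) (by linarith)

private lemma tsum_shift_lb {α : ℝ} (hα : 1 < α) {r : ℝ} (hr : 1 ≤ r) :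
    r ^ (1 - α) / (α - 1) ≤ Aα α r := by
  set d : ℕ → ℝ := fun k => (r + (k : ℝ)) ^ (1 - α) with hd
  have hrk : ∀ k : ℕ, (1 : ℝ) ≤ r + (k : ℝ) := fun k => by
    have : (0 : ℝ) ≤ (k : ℝ) := Nat.cast_nonneg k; linarith
  have hmono : ∀ k : ℕ, d (k + 1) ≤ d k := fun k => by
    apply Real.rpow_le_rpow_of_nonpos (by linarith [hrk k]) _ (by linarith)
    push_cast; linarith
  have hpos : ∀ k, 0 ≤ d k := fun k => Real.rpow_nonneg (by linarith [hrk k]) _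
  have hS : Summable (fun k => d k - d (k + 1)) := by
    refine summable_of_sum_range_le (c := d 0) (fun k => sub_nonneg.2 (hmono k)) (fun m => ?_)
    rw [Finset.sum_range_sub' d m]
    linarith [hpos m]
  have hd0 : Tendsto d atTop (nhds 0) := by
    have h1 : Tendsto (fun k : ℕ => r + (k : ℝ)) atTop atTop :=
      tendsto_atTop_add_const_left _ r tendsto_natCast_atTop_atTop
    have h2 := (tendsto_rpow_neg_atTop (show (0 : ℝ) < α - 1 by linarith)).comp h1
    have hde : d = (fun x : ℝ => x ^ (-(α - 1))) ∘ (fun k : ℕ => r + (k : ℝ)) := by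
      funext k; simp [hd, Function.comp, neg_sub]
    rw [hde]; exact h2
  have hT : Tendsto (fun m => ∑ i ∈ Finset.range m, (d i - d (i + 1))) atTop
      (nhds (d 0 - 0)) := by
    simp_rw [Finset.sum_range_sub' d]
    exact tendsto_const_nhds.sub hd0
  have hsum : HasSum (fun k => d k - d (k + 1)) (d 0) := by
    have h3 := hS.hasSum.tendsto_sum_nat
    have heq := tendsto_nhds_unique h3 hT
    rw [sub_zero] at heq
    rw [← heq]; exact hS.hasSum
  have hdiv : HasSum (fun k => (d k - d (k + 1)) / (α - 1)) (d 0 / (α - 1)) := hsum.div_const _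
  have hd0e : d 0 = r ^ (1 - α) := by simp [hd]
  calc r ^ (1 - α) / (α - 1) = d 0 / (α - 1) := by rw [hd0e]
    _ = ∑' k, (d k - d (k + 1)) / (α - 1) := hdiv.tsum_eq.symm
    _ ≤ ∑' k : ℕ, (r + (k : ℝ)) ^ (-α) := by
        refine hdiv.summable.tsum_le_tsum (fun k => ?_) (summable_shift hα hr)
        rw [div_le_iff₀ (by linarith : (0 : ℝ) < α - 1)]
        have he : d (k + 1) = ((r + (k : ℝ)) + 1) ^ (1 - α) := by
          rw [hd]; push_cast; rw [← add_assoc]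
        have hk : d k = (r + (k : ℝ)) ^ (1 - α) := rfl
        rw [hk, he]
        have h5 := ineq1 hα (hrk k)
        nlinarith [h5]

private lemma one_le_A {α : ℝ} (hα : 1 < α) : (1 : ℝ) ≤ Aα α 1 := by
  have h := (summable_shift hα (le_refl (1 : ℝ))).le_tsum 0
    (fun j _ => Real.rpow_nonneg
      (by have : (0 : ℝ) ≤ (j : ℝ) := Nat.cast_nonneg j; linarith) _)
  simpa [Aα] using h

private lemma row_lb {α : ℝ} (hα : 1 < α) (n i : ℕ) (hi : i < n) :
    Aα α ((i : ℝ) + 1) + Aα α ((n : ℝ) - (i : ℝ)) ≤ ∑' y : ℤ, rowF α n ((i : ℤ) + 1) y := by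
  set x : ℤ := (i : ℤ) + 1 with hx
  set F : ℤ → ℝ := fun y => |(x : ℝ) - (y : ℝ)| ^ (-α) with hF
  have hFnn : ∀ y, 0 ≤ F y := fun y => Real.rpow_nonneg (abs_nonneg _) _
  have hFsum : Summable F := by
    have h0 : Summable ((fun m : ℤ => |(m : ℝ)| ^ (-α)) ∘ (fun y : ℤ => x - y)) :=
      (Real.summable_abs_int_rpow hα).comp_injective sub_right_injective
    refine h0.congr fun y => ?_
    simp only [Function.comp_apply, hF]
    push_cast
    ring_nf
  set f : ℤ → ℝ := fun y => if y ∈ Finset.Icc (1 : ℤ) (n : ℤ) then 0 else F y with hf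
  have hfle : ∀ y, f y ≤ F y := fun y => by
    simp only [hf]; split_ifs; exacts [hFnn y, le_refl _]
  have hfnn : ∀ y, 0 ≤ f y := fun y => by
    simp only [hf]; split_ifs; exacts [le_refl 0, hFnn y]
  have hfsum : Summable f := Summable.of_nonneg_of_le hfnn hfle hFsum
  set G : ℤ → ℝ := fun y => if y ≤ 0 then F y else 0 with hG
  set H : ℤ → ℝ := fun y => if (n : ℤ) + 1 ≤ y then F y else 0 with hH
  have hGnn : ∀ y, 0 ≤ G y := fun y => by
    simp only [hG]; split_ifs; exacts [hFnn y, le_refl 0]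
  have hHnn : ∀ y, 0 ≤ H y := fun y => by
    simp only [hH]; split_ifs; exacts [hFnn y, le_refl 0]
  have hGsum : Summable G := Summable.of_nonneg_of_le hGnn
    (fun y => by simp only [hG]; split_ifs; exacts [le_refl _, hFnn y]) hFsum
  have hHsum : Summable H := Summable.of_nonneg_of_le hHnn
    (fun y => by simp only [hH]; split_ifs; exacts [le_refl _, hFnn y]) hFsum
  have key : ∀ y, G y + H y ≤ f y := by
    intro y
    rcases le_or_gt y 0 with h0 | h0
    · have hni : ¬ ((n : ℤ) + 1 ≤ y) := by omega
      have hmem : y ∉ Finset.Icc (1 : ℤ) (n : ℤ) := by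
        simp only [Finset.mem_Icc]; omega
      simp only [hG, hH, hf, if_pos h0, if_neg hni, if_neg hmem]
      simp
    · rcases le_or_gt y (n : ℤ) with h1 | h1
      · have hmem : y ∈ Finset.Icc (1 : ℤ) (n : ℤ) := by
          simp only [Finset.mem_Icc]; omega
        have hy0 : ¬ y ≤ 0 := by omega
        have hny : ¬ ((n : ℤ) + 1 ≤ y) := by omega
        simp only [hG, hH, hf, if_pos hmem, if_neg hy0, if_neg hny]
        norm_num
      · have hmem : y ∉ Finset.Icc (1 : ℤ) (n : ℤ) := by
          simp only [Finset.mem_Icc]; omega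
        have hy0 : ¬ y ≤ 0 := by omega
        have hny : (n : ℤ) + 1 ≤ y := by omega
        simp only [hG, hH, hf, if_neg hmem, if_neg hy0, if_pos hny]
        simp
  have step1 : (∑' y, G y) + (∑' y, H y) ≤ ∑' y, f y := by
    have h1 := (hGsum.add hHsum).tsum_le_tsum key hfsum
    rwa [hGsum.tsum_add hHsum] at h1
  have stepG : Aα α ((i : ℝ) + 1) ≤ ∑' y, G y := by
    have hsm : Summable (fun k : ℕ => (((i : ℝ) + 1) + (k : ℝ)) ^ (-α)) :=
      summable_shift hα (by have : (0 : ℝ) ≤ (i : ℝ) := Nat.cast_nonneg i; linarith)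
    refine hsm.tsum_le_tsum_of_inj (fun k : ℕ => -(k : ℤ)) (fun a b h => by simpa using h)
      (fun c _ => hGnn c) (fun k => ?_) hGsum
    have hGe : G (-(k : ℤ)) = (((i : ℝ) + 1) + (k : ℝ)) ^ (-α) := by
      simp only [hG, hF]
      rw [if_pos (by omega : -(k : ℤ) ≤ 0)]
      congr 1
      rw [hx]
      push_cast
      rw [sub_neg_eq_add, abs_of_pos] <;> positivity
    rw [hGe]
  have stepH : Aα α ((n : ℝ) - (i : ℝ)) ≤ ∑' y, H y := by
    have hiR : (i : ℝ) + 1 ≤ (n : ℝ) := by exact_mod_cast hi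
    have hr1 : (1 : ℝ) ≤ (n : ℝ) - (i : ℝ) := by linarith
    have hsm : Summable (fun k : ℕ => (((n : ℝ) - (i : ℝ)) + (k : ℝ)) ^ (-α)) :=
      summable_shift hα hr1
    refine hsm.tsum_le_tsum_of_inj (fun k : ℕ => (n : ℤ) + 1 + (k : ℤ))
      (fun a b h => by simpa using h)
      (fun c _ => hHnn c) (fun k => ?_) hHsum
    have hHe : H ((n : ℤ) + 1 + (k : ℤ)) = (((n : ℝ) - (i : ℝ)) + (k : ℝ)) ^ (-α) := by
      simp only [hH, hF]
      rw [if_pos (by omega : (n : ℤ) + 1 ≤ (n : ℤ) + 1 + (k : ℤ))]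
      congr 1
      rw [hx]
      push_cast
      rw [abs_of_neg]
      · ring
      · have h2 : (0 : ℝ) ≤ (k : ℝ) := Nat.cast_nonneg k
        linarith
    rw [hHe]
  have hfinal : ∑' y, f y = ∑' y : ℤ, rowF α n x y := by
    apply tsum_congr
    intro y
    simp only [hf, hF, rowF]
  calc Aα α ((i : ℝ) + 1) + Aα α ((n : ℝ) - (i : ℝ))
      ≤ (∑' y, G y) + (∑' y, H y) := add_le_add stepG stepH
    _ ≤ ∑' y, f y := step1
    _ = ∑' y : ℤ, rowF α n x y := hfinal

private lemma sum_Icc_int_eq (F : ℤ → ℝ) (n : ℕ) :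
    ∑ x ∈ Finset.Icc (1 : ℤ) (n : ℤ), F x = ∑ i ∈ Finset.range n, F ((i : ℤ) + 1) := by
  induction n with
  | zero => simp
  | succ m ih =>
    have hins : Finset.Icc (1 : ℤ) ((m + 1 : ℕ) : ℤ)
        = insert ((m : ℤ) + 1) (Finset.Icc (1 : ℤ) (m : ℤ)) := by
      ext y
      simp only [Finset.mem_Icc, Finset.mem_insert]
      omega
    rw [hins, Finset.sum_insert (by simp only [Finset.mem_Icc]; omega), ih,
      Finset.sum_range_succ]
    ring

/-- lower bounds for the single-bubble energy (Lemma `campos`). -/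
theorem single_bubble_lower_bound (α : ℝ) (hα1 : 1 < α) (hα2 : α ≤ 2) (n : ℕ) (hn : 1 ≤ n) :
    (α < 2 → 4 + 4 / ((α - 1) * (2 - α)) * (((n : ℝ) + 1) ^ (2 - α) - (2 : ℝ) ^ (2 - α))
        ≤ Hbar α n) ∧
    (α = 2 → 4 + 4 * Real.log (1 + (n : ℝ)) - 4 * Real.log 2 ≤ Hbar α n) := by
  have hrow : ∀ i ∈ Finset.range n,
      Aα α ((i : ℝ) + 1) + Aα α ((n : ℝ) - (i : ℝ)) ≤ ∑' y : ℤ, rowF α n ((i : ℤ) + 1) y :=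
    fun i hi => row_lb hα1 n i (Finset.mem_range.mp hi)
  have hrefl : ∑ i ∈ Finset.range n, Aα α ((n : ℝ) - (i : ℝ))
      = ∑ i ∈ Finset.range n, Aα α ((i : ℝ) + 1) := by
    rw [← Finset.sum_range_reflect (fun j : ℕ => Aα α ((j : ℝ) + 1)) n]
    refine Finset.sum_congr rfl fun i hi => ?_
    have hi' : i < n := Finset.mem_range.mp hi
    congr 1
    have h1 : i ≤ n - 1 := by omega
    rw [Nat.cast_sub h1, Nat.cast_sub (by omega : 1 ≤ n)]
    push_cast
    ring
  have hHbar : 4 * ∑ i ∈ Finset.range n, Aα α ((i : ℝ) + 1) ≤ Hbar α n := by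
    have e1 : Hbar α n = 2 * ∑ i ∈ Finset.range n, ∑' y : ℤ, rowF α n ((i : ℤ) + 1) y := by
      rw [show Hbar α n
          = 2 * ∑ x ∈ Finset.Icc (1 : ℤ) (n : ℤ), ∑' y : ℤ, rowF α n x y from rfl,
        sum_Icc_int_eq]
    rw [e1]
    have h2 := Finset.sum_le_sum hrow
    rw [Finset.sum_add_distrib, hrefl] at h2
    linarith
  obtain ⟨m, rfl⟩ : ∃ m, n = m + 1 := ⟨n - 1, by omega⟩
  have hsplit : ∑ i ∈ Finset.range (m + 1), Aα α ((i : ℝ) + 1)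
      = (∑ i ∈ Finset.range m, Aα α ((i : ℝ) + 2)) + Aα α 1 := by
    rw [Finset.sum_range_succ']
    congr 1
    · refine Finset.sum_congr rfl fun i _ => ?_
      congr 1
      push_cast
      ring
    · norm_num
  have hA1 := one_le_A hα1
  rw [hsplit] at hHbar
  constructor
  · intro h2α
    have hD : (0 : ℝ) < (α - 1) * (2 - α) := mul_pos (by linarith) (by linarith)
    have hterm : ∀ i ∈ Finset.range m,
        (((i : ℝ) + 3) ^ (2 - α) - ((i : ℝ) + 2) ^ (2 - α)) / ((α - 1) * (2 - α))
          ≤ Aα α ((i : ℝ) + 2) := by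
      intro i _
      have hs : (1 : ℝ) ≤ (i : ℝ) + 2 := by
        have : (0 : ℝ) ≤ (i : ℝ) := Nat.cast_nonneg i; linarith
      have h1 := tsum_shift_lb hα1 hs
      have h2 := ineq2 hα1 hα2 hs
      rw [show (i : ℝ) + 2 + 1 = (i : ℝ) + 3 by ring] at h2
      rw [div_le_iff₀ hD]
      rw [div_le_iff₀ (by linarith : (0 : ℝ) < α - 1)] at h1
      have h4 := mul_le_mul_of_nonneg_right h1 (by linarith : (0 : ℝ) ≤ 2 - α)
      nlinarith [h2, h4]
    have htel : ∑ i ∈ Finset.range m, (((i : ℝ) + 3) ^ (2 - α) - ((i : ℝ) + 2) ^ (2 - α))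
        = ((m : ℝ) + 2) ^ (2 - α) - (2 : ℝ) ^ (2 - α) := by
      calc ∑ i ∈ Finset.range m, (((i : ℝ) + 3) ^ (2 - α) - ((i : ℝ) + 2) ^ (2 - α))
          = ∑ i ∈ Finset.range m, ((fun j : ℕ => ((j : ℝ) + 2) ^ (2 - α)) (i + 1)
              - (fun j : ℕ => ((j : ℝ) + 2) ^ (2 - α)) i) := by
            refine Finset.sum_congr rfl fun i _ => ?_
            simp only []
            congr 2
            push_cast
            ring
        _ = ((m : ℝ) + 2) ^ (2 - α) - (((0 : ℕ) : ℝ) + 2) ^ (2 - α) :=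
            Finset.sum_range_sub (fun j : ℕ => ((j : ℝ) + 2) ^ (2 - α)) m
        _ = ((m : ℝ) + 2) ^ (2 - α) - (2 : ℝ) ^ (2 - α) := by norm_num
    have hsum2 : (((m : ℝ) + 2) ^ (2 - α) - (2 : ℝ) ^ (2 - α)) / ((α - 1) * (2 - α))
        ≤ ∑ i ∈ Finset.range m, Aα α ((i : ℝ) + 2) := by
      calc (((m : ℝ) + 2) ^ (2 - α) - (2 : ℝ) ^ (2 - α)) / ((α - 1) * (2 - α))
          = ∑ i ∈ Finset.range m,
            ((((i : ℝ) + 3) ^ (2 - α) - ((i : ℝ) + 2) ^ (2 - α)) / ((α - 1) * (2 - α))) := by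
            rw [← Finset.sum_div, htel]
        _ ≤ _ := Finset.sum_le_sum hterm
    have hcast : ((m + 1 : ℕ) : ℝ) + 1 = (m : ℝ) + 2 := by push_cast; ring
    rw [hcast]
    have hfin : 4 / ((α - 1) * (2 - α)) * (((m : ℝ) + 2) ^ (2 - α) - (2 : ℝ) ^ (2 - α))
        = 4 * ((((m : ℝ) + 2) ^ (2 - α) - (2 : ℝ) ^ (2 - α)) / ((α - 1) * (2 - α))) := by
      ring
    rw [hfin]
    linarith
  · intro hα2'
    subst hα2'
    have hterm : ∀ i ∈ Finset.range m,
        Real.log ((i : ℝ) + 3) - Real.log ((i : ℝ) + 2) ≤ Aα 2 ((i : ℝ) + 2) := by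
      intro i _
      have hs : (1 : ℝ) ≤ (i : ℝ) + 2 := by
        have : (0 : ℝ) ≤ (i : ℝ) := Nat.cast_nonneg i; linarith
      have h1 := tsum_shift_lb (by norm_num : (1 : ℝ) < 2) hs
      have h2 := ineq3 hs
      rw [show (i : ℝ) + 2 + 1 = (i : ℝ) + 3 by ring] at h2
      have h3 : ((i : ℝ) + 2) ^ ((1 : ℝ) - 2) / (2 - 1) = ((i : ℝ) + 2)⁻¹ := by
        rw [show (1 : ℝ) - 2 = -1 by norm_num, Real.rpow_neg_one]
        norm_num
      rw [h3] at h1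
      linarith
    have htel : ∑ i ∈ Finset.range m, (Real.log ((i : ℝ) + 3) - Real.log ((i : ℝ) + 2))
        = Real.log ((m : ℝ) + 2) - Real.log 2 := by
      calc ∑ i ∈ Finset.range m, (Real.log ((i : ℝ) + 3) - Real.log ((i : ℝ) + 2))
          = ∑ i ∈ Finset.range m, ((fun j : ℕ => Real.log ((j : ℝ) + 2)) (i + 1)
              - (fun j : ℕ => Real.log ((j : ℝ) + 2)) i) := by
            refine Finset.sum_congr rfl fun i _ => ?_
            simp only []
            congr 2
            push_cast
            ring
        _ = Real.log ((m : ℝ) + 2) - Real.log (((0 : ℕ) : ℝ) + 2) :=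
            Finset.sum_range_sub (fun j : ℕ => Real.log ((j : ℝ) + 2)) m
        _ = Real.log ((m : ℝ) + 2) - Real.log 2 := by norm_num
    have hsum2 : Real.log ((m : ℝ) + 2) - Real.log 2
        ≤ ∑ i ∈ Finset.range m, Aα 2 ((i : ℝ) + 2) := by
      rw [← htel]
      exact Finset.sum_le_sum hterm
    have hcast : 1 + ((m + 1 : ℕ) : ℝ) = (m : ℝ) + 2 := by push_cast; ring
    rw [hcast]
    linarith
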